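/- Let ℓ be an odd prime, ζ a primitive ℓ-th root of unity, and for α ∈ ℤ[ζ] with α ≡ 1 mod (1−ζ), define the Kummer logarithmic derivatives ℒ^r(α) ∈ ℤ/ℓℤ by writing α = f(ζ) and taking the r-th derivative of log f(e^v) at v = 0 modulo ℓ. Then ℒ^r(αβ) ≡ ℒ^r(α) + ℒ^r(β) (mod ℓ) for 1 ≤ r ≤ ℓ − 2. -/

import Mathlib

open PowerSeries

/-- Kummer's differential logarithm: for a polynomial `f ∈ ℤ[X]` (representing
`α = f(ζ)`), `kummerL f r` is the `r`-th derivative of `log f(e^v)` at `v = 0`, computed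
formally as `(r−1)! · coeff_{r−1} (g'/g)` where `g = f(e^v) ∈ ℚ⟦v⟧`. -/
noncomputable def kummerL (f : Polynomial ℤ) (r : ℕ) : ℚ :=
  ((r - 1).factorial : ℚ) *
    PowerSeries.coeff (R := ℚ) (r - 1)
      (PowerSeries.derivative ℚ (Polynomial.eval₂ (Int.castRingHom (PowerSeries ℚ))
          (PowerSeries.exp ℚ) f) *
        (Polynomial.eval₂ (Int.castRingHom (PowerSeries ℚ)) (PowerSeries.exp ℚ) f)⁻¹)

/-- `x ≡ 0 (mod ℓ)` for a rational number `x`, in the `ℓ`-adic sense. -/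
def RatModCong (ℓ : ℕ) (x : ℚ) : Prop :=
  ∃ a b : ℤ, ¬ (ℓ : ℤ) ∣ b ∧ (b : ℚ) * x = (ℓ : ℚ) * a


/-- `x` is `ℓ`-integral. -/
def IntAt (ℓ : ℕ) (x : ℚ) : Prop :=
  ∃ a b : ℤ, ¬ (ℓ : ℤ) ∣ b ∧ (b : ℚ) * x = a

set_option linter.unusedSectionVars false
section Basics

variable {ℓ : ℕ} (hℓ : ℓ.Prime)
include hℓ

lemma not_dvd_one' : ¬ (ℓ : ℤ) ∣ (1 : ℤ) := by
  intro hd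
  have h2 := hℓ.two_le
  have := Int.le_of_dvd one_pos hd
  omega

lemma lprime : Prime (ℓ : ℤ) := Nat.prime_iff_prime_int.mp hℓ

lemma not_dvd_mul {b₁ b₂ : ℤ} (h1 : ¬ (ℓ : ℤ) ∣ b₁) (h2 : ¬ (ℓ : ℤ) ∣ b₂) :
    ¬ (ℓ : ℤ) ∣ b₁ * b₂ := by
  intro hd
  rcases (lprime hℓ).dvd_mul.mp hd with h | h
  exacts [h1 h, h2 h]

lemma IntAt.intCast (m : ℤ) : IntAt ℓ (m : ℚ) :=
  ⟨m, 1, not_dvd_one' hℓ, by push_cast; ring⟩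

lemma IntAt.natCast (m : ℕ) : IntAt ℓ (m : ℚ) := by
  simpa using IntAt.intCast hℓ (m : ℤ)

lemma IntAt.add {x y : ℚ} (hx : IntAt ℓ x) (hy : IntAt ℓ y) : IntAt ℓ (x + y) := by
  obtain ⟨a₁, b₁, hb₁, e₁⟩ := hx
  obtain ⟨a₂, b₂, hb₂, e₂⟩ := hy
  refine ⟨b₂ * a₁ + b₁ * a₂, b₁ * b₂, not_dvd_mul hℓ hb₁ hb₂, ?_⟩
  push_cast
  linear_combination (b₂ : ℚ) * e₁ + (b₁ : ℚ) * e₂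

lemma IntAt.mul {x y : ℚ} (hx : IntAt ℓ x) (hy : IntAt ℓ y) : IntAt ℓ (x * y) := by
  obtain ⟨a₁, b₁, hb₁, e₁⟩ := hx
  obtain ⟨a₂, b₂, hb₂, e₂⟩ := hy
  refine ⟨a₁ * a₂, b₁ * b₂, not_dvd_mul hℓ hb₁ hb₂, ?_⟩
  push_cast
  linear_combination (b₂ : ℚ) * y * e₁ + (a₁ : ℚ) * e₂

lemma IntAt.neg {x : ℚ} (hx : IntAt ℓ x) : IntAt ℓ (-x) := by
  obtain ⟨a, b, hb, e⟩ := hx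
  exact ⟨-a, b, hb, by push_cast; linear_combination -e⟩

lemma IntAt.zero : IntAt ℓ 0 := by simpa using IntAt.natCast hℓ 0

lemma IntAt.one : IntAt ℓ 1 := by simpa using IntAt.natCast hℓ 1

lemma IntAt.inv_intCast {m : ℤ} (hm : ¬ (ℓ : ℤ) ∣ m) : IntAt ℓ (m : ℚ)⁻¹ := by
  have hm0 : m ≠ 0 := by rintro rfl; exact hm (dvd_zero _)
  refine ⟨1, m, hm, ?_⟩
  have : (m : ℚ) ≠ 0 := Int.cast_ne_zero.mpr hm0
  field_simp
  simp

lemma IntAt.inv_factorial {n : ℕ} (hn : n < ℓ) : IntAt ℓ ((1 : ℚ) / n.factorial) := by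
  rw [one_div]
  have : ¬ (ℓ : ℤ) ∣ (n.factorial : ℤ) := by
    rw [Int.natCast_dvd_natCast, hℓ.dvd_factorial]
    omega
  simpa using IntAt.inv_intCast hℓ this

lemma IntAt.sum {ι : Type*} {s : Finset ι} {f : ι → ℚ}
    (h : ∀ i ∈ s, IntAt ℓ (f i)) : IntAt ℓ (∑ i ∈ s, f i) := by
  classical
  induction s using Finset.induction_on with
  | empty => simpa using IntAt.zero hℓ
  | insert x s hx ih =>
    rw [Finset.sum_insert hx]
    exact (h _ (Finset.mem_insert_self _ _)).add hℓ
      (ih fun i hi => h i (Finset.mem_insert_of_mem hi))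

lemma RatModCong.zero : RatModCong ℓ 0 :=
  ⟨0, 1, not_dvd_one' hℓ, by push_cast; ring⟩

lemma RatModCong.add {x y : ℚ} (hx : RatModCong ℓ x) (hy : RatModCong ℓ y) :
    RatModCong ℓ (x + y) := by
  obtain ⟨a₁, b₁, hb₁, e₁⟩ := hx
  obtain ⟨a₂, b₂, hb₂, e₂⟩ := hy
  refine ⟨b₂ * a₁ + b₁ * a₂, b₁ * b₂, not_dvd_mul hℓ hb₁ hb₂, ?_⟩
  push_cast
  linear_combination (b₂ : ℚ) * e₁ + (b₁ : ℚ) * e₂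

lemma RatModCong.neg {x : ℚ} (hx : RatModCong ℓ x) : RatModCong ℓ (-x) := by
  obtain ⟨a, b, hb, e⟩ := hx
  exact ⟨-a, b, hb, by push_cast; linear_combination -e⟩

lemma RatModCong.sub {x y : ℚ} (hx : RatModCong ℓ x) (hy : RatModCong ℓ y) :
    RatModCong ℓ (x - y) := by
  rw [sub_eq_add_neg]; exact hx.add hℓ (hy.neg hℓ)

lemma RatModCong.mul_intAt {x y : ℚ} (hx : RatModCong ℓ x) (hy : IntAt ℓ y) :
    RatModCong ℓ (x * y) := by
  obtain ⟨a₁, b₁, hb₁, e₁⟩ := hx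
  obtain ⟨a₂, b₂, hb₂, e₂⟩ := hy
  refine ⟨a₁ * a₂, b₁ * b₂, not_dvd_mul hℓ hb₁ hb₂, ?_⟩
  push_cast
  linear_combination (b₂ : ℚ) * y * e₁ + ((ℓ : ℚ) * (a₁ : ℚ)) * e₂

lemma RatModCong.intAt_mul {x y : ℚ} (hx : IntAt ℓ x) (hy : RatModCong ℓ y) :
    RatModCong ℓ (x * y) := by
  rw [mul_comm]; exact hy.mul_intAt hℓ hx

lemma RatModCong.intCast {m : ℤ} (hm : (ℓ : ℤ) ∣ m) : RatModCong ℓ (m : ℚ) := by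
  obtain ⟨k, rfl⟩ := hm
  exact ⟨k, 1, not_dvd_one' hℓ, by push_cast; ring⟩

lemma RatModCong.sum {ι : Type*} {s : Finset ι} {f : ι → ℚ}
    (h : ∀ i ∈ s, RatModCong ℓ (f i)) : RatModCong ℓ (∑ i ∈ s, f i) := by
  classical
  induction s using Finset.induction_on with
  | empty => simpa using RatModCong.zero hℓ
  | insert x s hx ih =>
    rw [Finset.sum_insert hx]
    exact (h _ (Finset.mem_insert_self _ _)).add hℓ
      (ih fun i hi => h i (Finset.mem_insert_of_mem hi))

end Basics

/-- All coefficients of `A` up to `N` are `ℓ`-integral. -/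
def SInt (ℓ N : ℕ) (A : PowerSeries ℚ) : Prop :=
  ∀ k ≤ N, IntAt ℓ (PowerSeries.coeff k A)

/-- All coefficients of `A` up to `N` are `≡ 0 (mod ℓ)`. -/
def SMod (ℓ N : ℕ) (A : PowerSeries ℚ) : Prop :=
  ∀ k ≤ N, RatModCong ℓ (PowerSeries.coeff k A)

section Series

variable {ℓ N : ℕ} (hℓ : ℓ.Prime)
include hℓ

lemma SInt.add {A B : PowerSeries ℚ} (hA : SInt ℓ N A) (hB : SInt ℓ N B) :
    SInt ℓ N (A + B) := fun k hk => by
  rw [map_add]; exact (hA k hk).add hℓ (hB k hk)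

lemma SInt.mul {A B : PowerSeries ℚ} (hA : SInt ℓ N A) (hB : SInt ℓ N B) :
    SInt ℓ N (A * B) := fun k hk => by
  rw [PowerSeries.coeff_mul]
  refine IntAt.sum hℓ fun p hp => ?_
  rw [Finset.HasAntidiagonal.mem_antidiagonal] at hp
  exact (hA p.1 (le_trans (by omega) hk)).mul hℓ (hB p.2 (le_trans (by omega) hk))

lemma SInt.one : SInt ℓ N 1 := fun k _ => by
  rw [PowerSeries.coeff_one]
  split <;> [exact IntAt.one hℓ; exact IntAt.zero hℓ]

lemma SInt.pow {A : PowerSeries ℚ} (hA : SInt ℓ N A) (m : ℕ) : SInt ℓ N (A ^ m) := by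
  induction m with
  | zero => simpa using SInt.one hℓ
  | succ m ih => rw [pow_succ]; exact ih.mul hℓ hA

lemma SMod.mul_sInt {A B : PowerSeries ℚ} (hA : SMod ℓ N A) (hB : SInt ℓ N B) :
    SMod ℓ N (A * B) := fun k hk => by
  rw [PowerSeries.coeff_mul]
  refine RatModCong.sum hℓ fun p hp => ?_
  rw [Finset.HasAntidiagonal.mem_antidiagonal] at hp
  exact (hA p.1 (le_trans (by omega) hk)).mul_intAt hℓ (hB p.2 (le_trans (by omega) hk))

lemma SInt.exp (hN : N < ℓ) : SInt ℓ N (PowerSeries.exp ℚ) := fun k hk => by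
  rw [PowerSeries.coeff_exp]
  simpa using IntAt.inv_factorial hℓ (by omega)

lemma SInt.eval₂ (hN : N < ℓ) (p : Polynomial ℤ) :
    SInt ℓ N (Polynomial.eval₂ (Int.castRingHom (PowerSeries ℚ)) (PowerSeries.exp ℚ) p) := by
  rw [Polynomial.eval₂_eq_sum_range]
  intro k hk
  rw [map_sum]
  refine IntAt.sum hℓ fun i _ => ?_
  have : (Int.castRingHom (PowerSeries ℚ)) (p.coeff i) =
      PowerSeries.C ((p.coeff i : ℚ)) := by
    simp [map_intCast]
  rw [this, PowerSeries.coeff_C_mul]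
  exact (IntAt.intCast hℓ _).mul hℓ ((SInt.exp hℓ hN).pow hℓ i k hk)

lemma SInt.inv {A : PowerSeries ℚ} {m : ℤ} (hA : SInt ℓ N A)
    (hm : ¬ (ℓ : ℤ) ∣ m) (hc : PowerSeries.constantCoeff A = (m : ℚ)) :
    SInt ℓ N A⁻¹ := by
  intro k hk
  induction k using Nat.strong_induction_on with
  | _ k ih =>
    rw [PowerSeries.coeff_inv]
    split_ifs with h
    · rw [hc]; exact IntAt.inv_intCast hℓ hm
    · rw [hc]
      refine ((IntAt.inv_intCast hℓ hm).neg hℓ).mul hℓ (IntAt.sum hℓ fun p hp => ?_)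
      rw [Finset.HasAntidiagonal.mem_antidiagonal] at hp
      split_ifs with h2
      · exact (hA p.1 (by omega)).mul hℓ (ih p.2 (by omega) (by omega))
      · exact IntAt.zero hℓ

lemma SInt.derivative {A : PowerSeries ℚ} (hA : SInt ℓ (N + 1) A) :
    SInt ℓ N (PowerSeries.derivative ℚ A) := fun k hk => by
  rw [PowerSeries.coeff_derivative]
  exact (hA (k + 1) (by omega)).mul hℓ (by exact_mod_cast IntAt.natCast hℓ (k + 1))

lemma SMod.derivative {A : PowerSeries ℚ} (hA : SMod ℓ (N + 1) A) :
    SMod ℓ N (PowerSeries.derivative ℚ A) := fun k hk => by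
  rw [PowerSeries.coeff_derivative]
  exact (hA (k + 1) (by omega)).mul_intAt hℓ (by exact_mod_cast IntAt.natCast hℓ (k + 1))

end Series

section Cyclo

variable {ℓ : ℕ} (hℓ : ℓ.Prime)
include hℓ

lemma sum_pow_dvd {n : ℕ} (hn : n ≤ ℓ - 2) :
    (ℓ : ℤ) ∣ (∑ i ∈ Finset.range ℓ, (i : ℤ) ^ n) := by
  haveI : Fact ℓ.Prime := ⟨hℓ⟩
  haveI : NeZero ℓ := ⟨hℓ.ne_zero⟩
  have key : ((∑ i ∈ Finset.range ℓ, (i : ℤ) ^ n : ℤ) : ZMod ℓ) = 0 := by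
    push_cast
    have hbij : ∑ i ∈ Finset.range ℓ, ((i : ZMod ℓ)) ^ n = ∑ x : ZMod ℓ, x ^ n := by
      refine Finset.sum_nbij' (fun i => (i : ZMod ℓ)) (fun x => x.val) ?_ ?_ ?_ ?_ ?_
      · intro i _; exact Finset.mem_univ _
      · intro x _; exact Finset.mem_range.mpr (ZMod.val_lt x)
      · intro i hi; exact ZMod.val_natCast_of_lt (Finset.mem_range.mp hi)
      · intro x _; exact ZMod.natCast_zmod_val x
      · intro i _; rfl
    rw [hbij, FiniteField.sum_pow_lt_card_sub_one]
    rw [ZMod.card]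
    have := hℓ.two_le
    omega
  exact_mod_cast (ZMod.intCast_zmod_eq_zero_iff_dvd _ _).mp key

lemma sMod_cyclo (N : ℕ) (hN : N ≤ ℓ - 2) :
    SMod ℓ N (Polynomial.eval₂ (Int.castRingHom (PowerSeries ℚ)) (PowerSeries.exp ℚ)
      (Polynomial.cyclotomic ℓ ℤ)) := by
  haveI : Fact ℓ.Prime := ⟨hℓ⟩
  intro k hk
  rw [Polynomial.cyclotomic_prime, Polynomial.eval₂_finset_sum]
  simp only [Polynomial.eval₂_X_pow]
  rw [map_sum]
  have hcoeff : ∀ i : ℕ, (PowerSeries.coeff k) (PowerSeries.exp ℚ ^ i) =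
      (i : ℚ) ^ k * ((1 : ℚ) / k.factorial) := by
    intro i
    rw [PowerSeries.exp_pow_eq_rescale_exp, PowerSeries.coeff_rescale, PowerSeries.coeff_exp]
    simp
  simp only [hcoeff]
  rw [← Finset.sum_mul]
  have : (∑ i ∈ Finset.range ℓ, (i : ℚ) ^ k) = ((∑ i ∈ Finset.range ℓ, (i : ℤ) ^ k : ℤ) : ℚ) := by
    push_cast; rfl
  rw [this]
  have h2 := hℓ.two_le
  exact (RatModCong.intCast hℓ (sum_pow_dvd hℓ (by omega))).mul_intAt hℓ
    (IntAt.inv_factorial hℓ (by omega))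

/-- If an integer polynomial vanishes at a primitive `ℓ`-th root of unity, it is divisible
by the cyclotomic polynomial. -/
lemma cyclo_dvd {ζ : ℂ} (hζ : IsPrimitiveRoot ζ ℓ) (p : Polynomial ℤ)
    (hp : Polynomial.aeval ζ p = 0) : Polynomial.cyclotomic ℓ ℤ ∣ p := by
  rw [Polynomial.cyclotomic_eq_minpoly hζ hℓ.pos]
  exact minpoly.isIntegrallyClosed_dvd (hζ.isIntegral hℓ.pos) hp

/-- `α ≡ 1 mod (1 - ζ)` implies `f(1) ≡ 1 mod ℓ`. -/
lemma eval_one_cong {ζ : ℂ} (hζ : IsPrimitiveRoot ζ ℓ) (p : Polynomial ℤ)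
    (hp : ∃ u : Polynomial ℤ,
      Polynomial.aeval ζ p - 1 = (1 - ζ) * Polynomial.aeval ζ u) :
    (ℓ : ℤ) ∣ p.eval 1 - 1 := by
  haveI : Fact ℓ.Prime := ⟨hℓ⟩
  obtain ⟨u, hu⟩ := hp
  have hz : Polynomial.aeval ζ (p - 1 - (1 - Polynomial.X) * u) = 0 := by
    simp only [map_sub, map_mul, map_one, Polynomial.aeval_X]
    linear_combination hu
  obtain ⟨s, hs⟩ := cyclo_dvd hℓ hζ _ hz
  have := congrArg (Polynomial.eval 1) hs
  simp only [Polynomial.eval_sub, Polynomial.eval_one, Polynomial.eval_mul, Polynomial.eval_X,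
    sub_self, zero_mul, Polynomial.eval_one_cyclotomic_prime] at this
  exact ⟨s.eval 1, by linarith [this]⟩

end Cyclo

theorem kummerL_additive (ℓ : ℕ) (hℓ : ℓ.Prime) (hodd : ℓ ≠ 2)
    (ζ : ℂ) (hζ : IsPrimitiveRoot ζ ℓ)
    (f g h : Polynomial ℤ)
    (hf1 : Polynomial.eval 1 f ≠ 0) (hg1 : Polynomial.eval 1 g ≠ 0)
    (hh1 : Polynomial.eval 1 h ≠ 0)
    (hfcong : ∃ u : Polynomial ℤ,
      Polynomial.aeval ζ f - 1 = (1 - ζ) * Polynomial.aeval ζ u)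
    (hgcong : ∃ u : Polynomial ℤ,
      Polynomial.aeval ζ g - 1 = (1 - ζ) * Polynomial.aeval ζ u)
    (hmul : Polynomial.aeval ζ h = Polynomial.aeval ζ f * Polynomial.aeval ζ g)
    (r : ℕ) (hr1 : 1 ≤ r) (hr2 : r ≤ ℓ - 2) :
    RatModCong ℓ (kummerL h r - kummerL f r - kummerL g r) := by
  haveI : Fact ℓ.Prime := ⟨hℓ⟩
  have h2 : 2 ≤ ℓ := hℓ.two_le
  have h3 : 3 ≤ ℓ := by
    rcases Nat.lt_or_ge ℓ 3 with hlt | hge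
    · interval_cases ℓ <;> simp_all
    · exact hge
  obtain ⟨s, rfl⟩ : ∃ s, r = s + 1 := ⟨r - 1, by omega⟩
  have hs2 : s + 1 ≤ ℓ - 2 := hr2
  -- the polynomial `q` with `h = f * g + Φ_ℓ · q`
  obtain ⟨q, hq⟩ : Polynomial.cyclotomic ℓ ℤ ∣ (h - f * g) := by
    refine cyclo_dvd hℓ hζ _ ?_
    simp only [map_sub, map_mul, hmul, sub_self]
  -- congruences at 1
  have hf1m : (ℓ : ℤ) ∣ f.eval 1 - 1 := eval_one_cong hℓ hζ f hfcong
  have hg1m : (ℓ : ℤ) ∣ g.eval 1 - 1 := eval_one_cong hℓ hζ g hgcong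
  have hfnd : ¬ (ℓ : ℤ) ∣ f.eval 1 := by
    intro hd
    have : (ℓ : ℤ) ∣ 1 := by simpa using dvd_sub hd hf1m
    exact not_dvd_one' hℓ this
  have hgnd : ¬ (ℓ : ℤ) ∣ g.eval 1 := by
    intro hd
    have : (ℓ : ℤ) ∣ 1 := by simpa using dvd_sub hd hg1m
    exact not_dvd_one' hℓ this
  have hh1eq : h.eval 1 = f.eval 1 * g.eval 1 + (ℓ : ℤ) * q.eval 1 := by
    have := congrArg (Polynomial.eval 1) hq
    simp only [Polynomial.eval_sub, Polynomial.eval_mul,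
      Polynomial.eval_one_cyclotomic_prime] at this
    linarith [this]
  have hhnd : ¬ (ℓ : ℤ) ∣ h.eval 1 := by
    intro hd
    have hdfg : (ℓ : ℤ) ∣ f.eval 1 * g.eval 1 := by
      have : (ℓ : ℤ) ∣ h.eval 1 - (ℓ : ℤ) * q.eval 1 := dvd_sub hd ⟨q.eval 1, rfl⟩
      rw [hh1eq] at this
      simpa using this
    rcases (lprime hℓ).dvd_mul.mp hdfg with hc | hc
    exacts [hfnd hc, hgnd hc]
  -- power series
  set E := PowerSeries.exp ℚ with hE
  set F := Polynomial.eval₂ (Int.castRingHom (PowerSeries ℚ)) E f with hFdef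
  set G := Polynomial.eval₂ (Int.castRingHom (PowerSeries ℚ)) E g with hGdef
  set H := Polynomial.eval₂ (Int.castRingHom (PowerSeries ℚ)) E h with hHdef
  set Φs := Polynomial.eval₂ (Int.castRingHom (PowerSeries ℚ)) E (Polynomial.cyclotomic ℓ ℤ)
    with hPdef
  set Q := Polynomial.eval₂ (Int.castRingHom (PowerSeries ℚ)) E q with hQdef
  have hHdec : H = F * G + Φs * Q := by
    have hpoly : h = f * g + Polynomial.cyclotomic ℓ ℤ * q := by linear_combination hq
    rw [hHdef, hpoly, Polynomial.eval₂_add, Polynomial.eval₂_mul, Polynomial.eval₂_mul]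
  -- constant coefficients
  have hconst : ∀ p : Polynomial ℤ,
      PowerSeries.constantCoeff (R := ℚ)
        (Polynomial.eval₂ (Int.castRingHom (PowerSeries ℚ)) E p) = ((p.eval 1 : ℤ) : ℚ) := by
    intro p
    rw [hE, Polynomial.hom_eval₂, PowerSeries.constantCoeff_exp, Polynomial.eval₂_at_one]
    exact eq_intCast _ _
  have hcF : F * F⁻¹ = 1 := PowerSeries.mul_inv_cancel _ (by
    rw [hFdef, hconst f]; exact_mod_cast Int.cast_ne_zero.mpr hf1)
  have hcG : G * G⁻¹ = 1 := PowerSeries.mul_inv_cancel _ (by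
    rw [hGdef, hconst g]; exact_mod_cast Int.cast_ne_zero.mpr hg1)
  have hcH : H * H⁻¹ = 1 := PowerSeries.mul_inv_cancel _ (by
    rw [hHdef, hconst h]; exact_mod_cast Int.cast_ne_zero.mpr hh1)
  set dF := PowerSeries.derivative ℚ F with hdFdef
  set dG := PowerSeries.derivative ℚ G with hdGdef
  set dH := PowerSeries.derivative ℚ H with hdHdef
  set dD := PowerSeries.derivative ℚ (Φs * Q) with hdDdef
  -- the fundamental identity
  have hFGH : F * G * H⁻¹ = 1 - Φs * Q * H⁻¹ := by
    have hfg : F * G = H - Φs * Q := by rw [hHdec]; ring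
    rw [hfg, sub_mul, hcH]
  have hGH : G * H⁻¹ = F⁻¹ * (1 - Φs * Q * H⁻¹) := by
    rw [← hFGH, show F⁻¹ * (F * G * H⁻¹) = F * F⁻¹ * (G * H⁻¹) by ring, hcF, one_mul]
  have hFH : F * H⁻¹ = G⁻¹ * (1 - Φs * Q * H⁻¹) := by
    rw [← hFGH, show G⁻¹ * (F * G * H⁻¹) = G * G⁻¹ * (F * H⁻¹) by ring, hcG, one_mul]
  have hdHdec : dH = (dF * G + F * dG) + dD := by
    rw [hdHdef, hHdec, map_add, hdDdef]
    congr 1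
    rw [Derivation.leibniz, smul_eq_mul, smul_eq_mul, hdFdef, hdGdef]
    ring
  have e3 : dH * H⁻¹ - dF * F⁻¹ - dG * G⁻¹
      = (dD * (F * G) - Φs * Q * (dF * G + F * dG)) * (H⁻¹ * (F⁻¹ * G⁻¹)) := by
    rw [hdHdec,
      show ((dF * G + F * dG) + dD) * H⁻¹ - dF * F⁻¹ - dG * G⁻¹
        = dF * (G * H⁻¹) + dG * (F * H⁻¹) + dD * H⁻¹ - dF * F⁻¹ - dG * G⁻¹ by ring,
      hGH, hFH,
      show (dD * (F * G) - Φs * Q * (dF * G + F * dG)) * (H⁻¹ * (F⁻¹ * G⁻¹))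
        = dD * H⁻¹ * ((F * F⁻¹) * (G * G⁻¹))
          - dF * (Φs * Q * H⁻¹) * F⁻¹ * (G * G⁻¹)
          - dG * (Φs * Q * H⁻¹) * G⁻¹ * (F * F⁻¹) by ring,
      hcF, hcG]
    ring
  -- unfold kummerL
  have expand : kummerL h (s + 1) - kummerL f (s + 1) - kummerL g (s + 1)
      = (s.factorial : ℚ) * (PowerSeries.coeff s
          (dH * H⁻¹ - dF * F⁻¹ - dG * G⁻¹)) := by
    simp only [kummerL, Nat.add_sub_cancel, map_sub]
    rw [← hFdef, ← hGdef, ← hHdef, ← hdFdef, ← hdGdef, ← hdHdef]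
    ring
  rw [expand, e3]
  -- integrality bookkeeping
  have hltℓ : ∀ {N : ℕ}, N ≤ s + 1 → N < ℓ := by intro N hN; omega
  have hQint : SInt ℓ (s + 1) Q := SInt.eval₂ hℓ (by omega) q
  have hDmod : SMod ℓ (s + 1) (Φs * Q) := fun k hk =>
    ((sMod_cyclo hℓ (ℓ - 2) le_rfl).mul_sInt hℓ
      (SInt.eval₂ hℓ (by omega) q)) k (by omega)
  have hDmods : SMod ℓ s (Φs * Q) := fun k hk => hDmod k (by omega)
  have hdDmod : SMod ℓ s dD := SMod.derivative hℓ hDmod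
  have hFGint : SInt ℓ s (F * G) :=
    (SInt.eval₂ hℓ (hltℓ (by omega)) f).mul hℓ (SInt.eval₂ hℓ (hltℓ (by omega)) g)
  have hdFGint : SInt ℓ s (dF * G + F * dG) := by
    refine ((SInt.derivative hℓ ?_).mul hℓ (SInt.eval₂ hℓ (by omega) g)).add hℓ
      ((SInt.eval₂ hℓ (by omega) f).mul hℓ (SInt.derivative hℓ ?_))
    · exact SInt.eval₂ hℓ (by omega) f
    · exact SInt.eval₂ hℓ (by omega) g
  have hnum : SMod ℓ s (dD * (F * G) - Φs * Q * (dF * G + F * dG)) := by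
    intro k hk
    rw [map_sub]
    exact ((hdDmod.mul_sInt hℓ hFGint) k hk).sub hℓ
      ((hDmods.mul_sInt hℓ hdFGint) k hk)
  have hinv : SInt ℓ s (H⁻¹ * (F⁻¹ * G⁻¹)) := by
    refine (SInt.inv hℓ (SInt.eval₂ hℓ (by omega) h) hhnd ?_).mul hℓ
      ((SInt.inv hℓ (SInt.eval₂ hℓ (by omega) f) hfnd ?_).mul hℓ
        (SInt.inv hℓ (SInt.eval₂ hℓ (by omega) g) hgnd ?_))
    · exact hconst h
    · exact hconst f
    · exact hconst g
  exact RatModCong.intAt_mul hℓ (IntAt.natCast hℓ _)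
    ((hnum.mul_sInt hℓ hinv) s le_rfl)
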